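/- The field of constants k(X)^d is the field of quotients of the ring of constants k[X]^d: every f ∈ k(X) with d(f) = 0 can be written as f = F/G where F, G ∈ k[X], G ≠ 0, and d(F) = d(G) = 0. -/

import Mathlib

open MvPolynomial Finset

namespace Stmt6Aux

variable {k : Type*} [Field k] {K : Type*} [Field K] [Algebra k K]

theorem eig_mul (d : Derivation k K K) {a b : K} {l m : k}
    (ha : d a = l • a) (hb : d b = m • b) : d (a * b) = (l + m) • (a * b) := by
  simp only [Derivation.leibniz, ha, hb, smul_eq_mul, mul_smul_comm, add_smul, mul_comm b a]
  rw [add_comm]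

theorem eig_pow (d : Derivation k K K) {a : K} {l : k}
    (ha : d a = l • a) (m : ℕ) : d (a ^ m) = ((m : k) * l) • (a ^ m) := by
  induction m with
  | zero => simp
  | succ m ih =>
      rw [pow_succ, eig_mul d ih ha]
      push_cast; ring_nf

theorem eig_prod (d : Derivation k K K) {ι : Type*} (s : Finset ι) (g : ι → K) (c : ι → k)
    (h : ∀ i ∈ s, d (g i) = c i • g i) :
    d (∏ i ∈ s, g i) = (∑ i ∈ s, c i) • ∏ i ∈ s, g i := by
  classical
  induction s using Finset.induction_on with
  | empty => simp
  | insert _ _ hx ih =>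
      rename_i a s
      rw [Finset.prod_insert hx, Finset.sum_insert hx,
        eig_mul d (h a (mem_insert_self a s)) (ih fun i hi => h i (mem_insert_of_mem hi))]

theorem eig_sum_zero (d : Derivation k K K) (S : Finset k) (v : k → K)
    (hv : ∀ l ∈ S, d (v l) = l • v l) (h0 : ∑ l ∈ S, v l = 0) : ∀ l ∈ S, v l = 0 := by
  classical
  induction S using Finset.induction_on generalizing v with
  | empty => simp
  | insert _ _ hx ih =>
      rename_i a s
      rw [Finset.sum_insert hx] at h0
      have hd0 : a • v a + ∑ l ∈ s, l • v l = 0 := by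
        have := congrArg d h0
        rw [map_add, map_sum, map_zero, hv a (mem_insert_self a s)] at this
        rw [← this]
        congr 1
        exact Finset.sum_congr rfl fun l hl => (hv l (mem_insert_of_mem hl)).symm
      have hsub : ∑ l ∈ s, (l - a) • v l = 0 := by
        have h1 : a • (v a + ∑ l ∈ s, v l) = 0 := by rw [h0, smul_zero]
        rw [smul_add, Finset.smul_sum] at h1
        have := sub_eq_zero_of_eq (hd0.trans h1.symm)
        rw [add_sub_add_left_eq_sub, ← Finset.sum_sub_distrib] at this
        rw [← this]
        exact Finset.sum_congr rfl fun l hl => by rw [sub_smul]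
      have key : ∀ l ∈ s, (l - a) • v l = 0 := by
        refine ih (fun l => (l - a) • v l) (fun l hl => ?_) hsub
        rw [Derivation.map_smul, hv l (mem_insert_of_mem hl), smul_comm]
      intro l hl
      rcases mem_insert.mp hl with rfl | hl'
      · have : ∑ l ∈ s, v l = 0 := by
          refine Finset.sum_eq_zero fun x hx' => ?_
          have h2 := key x hx'
          have hxa : x - l ≠ 0 := sub_ne_zero.mpr (by rintro rfl; exact hx hx')
          exact (smul_eq_zero.mp h2).resolve_left hxa
        rw [this, add_zero] at h0; exact h0
      · have h2 := key l hl'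
        have hxa : l - a ≠ 0 := sub_ne_zero.mpr (by rintro rfl; exact hx hl')
        exact (smul_eq_zero.mp h2).resolve_left hxa

variable {n : ℕ} [NeZero n]

noncomputable def χ (ε : k) (a : ZMod n) : k := ε ^ a.val

theorem pow_val_mod {ε : k} (h1 : ε ^ n = 1) (m : ℕ) : ε ^ (m % n) = ε ^ m := by
  conv_rhs => rw [← Nat.div_add_mod m n]
  rw [pow_add, pow_mul, h1, one_pow, one_mul]

theorem chi_add {ε : k} (h1 : ε ^ n = 1) (a b : ZMod n) : χ ε (a + b) = χ ε a * χ ε b := by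
  rw [χ, χ, χ, ZMod.val_add, pow_val_mod h1, pow_add]

theorem chi_zero (ε : k) : χ (n := n) ε 0 = 1 := by
  rw [χ, ZMod.val_zero, pow_zero]

theorem chi_mul_pow {ε : k} (h1 : ε ^ n = 1) (i m : ZMod n) :
    χ ε (i * m) = (χ ε m) ^ i.val := by
  rw [χ, χ, ZMod.val_mul, pow_val_mod h1, ← pow_mul, mul_comm]

theorem sum_chi {ε : k} (hε : IsPrimitiveRoot ε n) {m : ZMod n} (hm : m ≠ 0) :
    ∑ i : ZMod n, χ ε (i * m) = 0 := by
  have h1 : ε ^ n = 1 := hε.pow_eq_one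
  have hsum : ∑ i : ZMod n, χ ε (i * m) = ∑ t ∈ Finset.range n, (χ ε m) ^ t := by
    refine Finset.sum_nbij' (i := fun (i : ZMod n) => i.val) (j := fun (t : ℕ) => (t : ZMod n))
      (fun i _ => Finset.mem_range.mpr (ZMod.val_lt i)) (fun t _ => Finset.mem_univ _)
      (fun i _ => ZMod.natCast_rightInverse i)
      (fun t ht => ZMod.val_cast_of_lt (Finset.mem_range.mp ht))
      (fun i _ => chi_mul_pow h1 i m)
  have hne : χ ε m ≠ 1 := by
    intro hcontra
    have hdvd : n ∣ m.val := hε.dvd_of_pow_eq_one m.val hcontra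
    have hlt : m.val < n := ZMod.val_lt m
    have : m.val = 0 := Nat.eq_zero_of_dvd_of_lt hdvd hlt
    exact hm ((ZMod.val_eq_zero m).mp this)
  have hpow : χ ε m ^ n = 1 := by rw [χ, ← pow_mul, mul_comm, pow_mul, h1, one_pow]
  rw [hsum, geom_sum_eq hne, hpow, sub_self, zero_div]

variable (ε : k)

noncomputable def Y (i : ZMod n) : MvPolynomial (ZMod n) k :=
  ∑ l : ZMod n, χ ε (i * l) • X l

noncomputable def P (α : ZMod n → ℕ) : MvPolynomial (ZMod n) k :=
  ∏ i : ZMod n, Y ε i ^ α i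

noncomputable def wt (α : ZMod n → ℕ) : k := ∑ i : ZMod n, (α i : k) * χ ε (-i)

theorem P_mul (α β : ZMod n → ℕ) : P ε α * P ε β = P ε (α + β) := by
  rw [P, P, P, ← Finset.prod_mul_distrib]
  exact Finset.prod_congr rfl fun i _ => by rw [Pi.add_apply, pow_add]

theorem P_zero : P (n := n) ε (fun _ => 0) = 1 := by
  simp [P]

theorem Y_eq_P (i : ZMod n) : Y ε i = P ε (fun i' => if i' = i then 1 else 0) := by
  rw [P, Finset.prod_eq_single i (fun b _ hb => by simp [hb]) (fun h => absurd (mem_univ i) h)]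
  simp

theorem Y_ne_zero [CharZero k] (h1 : ε ^ n = 1) (i : ZMod n) : Y ε i ≠ 0 := by
  intro hcontra
  have := congrArg (aeval (fun l : ZMod n => χ ε (-(i * l))) : MvPolynomial (ZMod n) k →ₐ[k] k)
    hcontra
  rw [Y, map_sum, map_zero] at this
  simp only [map_smul, aeval_X, smul_eq_mul] at this
  have heq : ∀ l : ZMod n, χ ε (i * l) * χ ε (-(i * l)) = 1 := fun l => by
    rw [← chi_add h1, add_neg_cancel, chi_zero]
  rw [Finset.sum_congr rfl (fun l _ => heq l), Finset.sum_const, nsmul_eq_mul, mul_one,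
    Finset.card_univ, ZMod.card] at this
  exact Nat.cast_ne_zero.mpr (NeZero.ne n) this

theorem P_ne_zero [CharZero k] (h1 : ε ^ n = 1) (α : ZMod n → ℕ) : P ε α ≠ 0 := by
  rw [P]
  exact Finset.prod_ne_zero_iff.mpr fun i _ => pow_ne_zero _ (Y_ne_zero ε h1 i)

theorem chi_mul_X (hε : IsPrimitiveRoot ε n) [CharZero k] (j : ZMod n) :
    ∑ i : ZMod n, χ ε (-(i * j)) • Y ε i = (n : k) • X j := by
  have h1 : ε ^ n = 1 := hε.pow_eq_one
  calc ∑ i : ZMod n, χ ε (-(i * j)) • Y ε i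
      = ∑ i : ZMod n, ∑ l : ZMod n, χ ε (i * (l - j)) • X l := by
        refine Finset.sum_congr rfl fun i _ => ?_
        rw [Y, Finset.smul_sum]
        refine Finset.sum_congr rfl fun l _ => ?_
        rw [smul_smul, ← chi_add h1]
        congr 2
        ring
    _ = ∑ l : ZMod n, (∑ i : ZMod n, χ ε (i * (l - j))) • X l := by
        rw [Finset.sum_comm]
        exact Finset.sum_congr rfl fun l _ => (Finset.sum_smul).symm
    _ = (n : k) • X j := by
        rw [Finset.sum_eq_single j (fun l _ hl => by
            rw [sum_chi hε (sub_ne_zero.mpr hl), zero_smul])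
          (fun h => absurd (mem_univ j) h)]
        rw [sub_self]
        have hc : ∀ i : ZMod n, χ ε (i * 0) = 1 := fun i => by rw [mul_zero, chi_zero]
        rw [Finset.sum_congr rfl (fun i _ => hc i), Finset.sum_const, Finset.card_univ,
          ZMod.card, nsmul_eq_mul, mul_one]

theorem span_P (hε : IsPrimitiveRoot ε n) [CharZero k] :
    Submodule.span k (Set.range (P (n := n) ε)) = ⊤ := by
  set S := Submodule.span k (Set.range (P (n := n) ε)) with hS
  have hPmem : ∀ α, P ε α ∈ S := fun α => Submodule.subset_span ⟨α, rfl⟩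
  have hmulP : ∀ p ∈ S, ∀ γ, p * P ε γ ∈ S := by
    intro p hp γ
    induction hp using Submodule.span_induction with
    | mem x hx => obtain ⟨α, rfl⟩ := hx; rw [P_mul]; exact hPmem _
    | zero => rw [zero_mul]; exact S.zero_mem
    | add x y _ _ hx hy => rw [add_mul]; exact S.add_mem hx hy
    | smul c x _ hx => rw [smul_mul_assoc]; exact S.smul_mem c hx
  have hmulY : ∀ p ∈ S, ∀ i, p * Y ε i ∈ S := by
    intro p hp i
    rw [Y_eq_P]
    exact hmulP p hp _
  have hX : ∀ p ∈ S, ∀ j : ZMod n, p * X j ∈ S := by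
    intro p hp j
    have hn0 : (n : k) ≠ 0 := Nat.cast_ne_zero.mpr (NeZero.ne n)
    have : p * X j = (n : k)⁻¹ • ∑ i : ZMod n, χ ε (-(i * j)) • (p * Y ε i) := by
      have := chi_mul_X ε hε j
      calc p * X j = (n : k)⁻¹ • ((n : k) • (p * X j)) := by
            rw [smul_smul, inv_mul_cancel₀ hn0, one_smul]
        _ = (n : k)⁻¹ • (p * ((n : k) • X j)) := by rw [mul_smul_comm]
        _ = _ := by
            rw [← this, Finset.mul_sum]
            congr 1
            exact Finset.sum_congr rfl fun i _ => (mul_smul_comm _ _ _)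
    rw [this]
    exact S.smul_mem _ (Submodule.sum_mem S fun i _ => S.smul_mem _ (hmulY p hp i))
  rw [Submodule.eq_top_iff']
  intro p
  induction p using MvPolynomial.induction_on with
  | C a =>
      have hCa : (C a : MvPolynomial (ZMod n) k) = a • 1 := by
        rw [smul_eq_C_mul, mul_one]
      rw [hCa]
      have h1S : (1 : MvPolynomial (ZMod n) k) ∈ S := by
        rw [← P_zero (n := n) ε]; exact hPmem _
      exact S.smul_mem a h1S
  | add p q hp hq => exact S.add_mem hp hq
  | mul_X p j hp => exact hX p hp j


variable {K : Type*} [Field K] [Algebra k K]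

theorem eig_Y_K (h1 : ε ^ n = 1) (ψ : MvPolynomial (ZMod n) k →ₐ[k] K)
    (d : Derivation k K K) (hd : ∀ j, d (ψ (X j)) = ψ (X (j + 1))) (i : ZMod n) :
    d (ψ (Y ε i)) = χ ε (-i) • ψ (Y ε i) := by
  rw [Y, map_sum]
  simp only [map_smul]
  rw [map_sum]
  simp only [Derivation.map_smul, hd]
  rw [Finset.smul_sum]
  refine Fintype.sum_equiv (Equiv.addRight (1 : ZMod n)) _ _ fun x => ?_
  simp only [Equiv.coe_addRight, smul_smul]
  congr 1
  rw [← chi_add h1]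
  congr 1
  ring

theorem eig_P_K (h1 : ε ^ n = 1) (ψ : MvPolynomial (ZMod n) k →ₐ[k] K)
    (d : Derivation k K K) (hd : ∀ j, d (ψ (X j)) = ψ (X (j + 1))) (α : ZMod n → ℕ) :
    d (ψ (P ε α)) = wt ε α • ψ (P ε α) := by
  rw [P, map_prod]
  rw [eig_prod d univ _ (fun i => (α i : k) * χ ε (-i)) (fun i _ => by
    rw [map_pow]
    exact eig_pow d (eig_Y_K ε h1 ψ d hd i) (α i))]
  rfl

theorem sum_chi_neg (hε : IsPrimitiveRoot ε n) (hn1 : (1 : ZMod n) ≠ 0) :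
    ∑ j : ZMod n, χ ε (-j) = 0 := by
  have h := sum_chi hε hn1
  rw [← h]
  refine Fintype.sum_equiv (Equiv.neg (ZMod n)) _ _ fun x => ?_
  simp

theorem wt_compl (hε : IsPrimitiveRoot ε n) (hn1 : (1 : ZMod n) ≠ 0) (α : ZMod n → ℕ) :
    wt ε (fun j => (∑ i : ZMod n, α i) - α j) = - wt ε α := by
  have hle : ∀ j, α j ≤ ∑ i : ZMod n, α i :=
    fun j => Finset.single_le_sum (fun i _ => Nat.zero_le _) (mem_univ j)
  rw [wt, wt]
  calc ∑ j : ZMod n, (((∑ i : ZMod n, α i) - α j : ℕ) : k) * χ ε (-j)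
      = ∑ j : ZMod n, (((∑ i : ZMod n, α i : ℕ) : k) * χ ε (-j) - (α j : k) * χ ε (-j)) := by
        refine Finset.sum_congr rfl fun j _ => ?_
        rw [Nat.cast_sub (hle j), sub_mul]
    _ = ((∑ i : ZMod n, α i : ℕ) : k) * ∑ j : ZMod n, χ ε (-j)
          - ∑ j : ZMod n, (α j : k) * χ ε (-j) := by
        rw [Finset.sum_sub_distrib, Finset.mul_sum]
    _ = - ∑ j : ZMod n, (α j : k) * χ ε (-j) := by
        rw [sum_chi_neg ε hε hn1, mul_zero, zero_sub]


open scoped Classical in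
noncomputable def comp (ε : k) (c : (ZMod n → ℕ) →₀ k) (l : k) : MvPolynomial (ZMod n) k :=
  ∑ α ∈ c.support.filter (fun α => wt ε α = l), c α • P ε α

open scoped Classical in
theorem comp_sum (c : (ZMod n → ℕ) →₀ k) (T : Finset k)
    (hT : ∀ α ∈ c.support, wt ε α ∈ T) :
    ∑ l ∈ T, comp ε c l = ∑ α ∈ c.support, c α • P ε α := by
  simp only [comp]
  exact Finset.sum_fiberwise_of_maps_to hT _

open scoped Classical in
theorem comp_eq_zero (c : (ZMod n → ℕ) →₀ k) (l : k)
    (h : ∀ α ∈ c.support, wt ε α ≠ l) : comp ε c l = 0 := by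
  rw [comp]
  refine Finset.sum_eq_zero fun α hα => absurd (Finset.mem_filter.mp hα).2
    (h α (Finset.mem_of_mem_filter α hα))

open scoped Classical in
theorem comp_wt_mem (c : (ZMod n → ℕ) →₀ k) (l : k) (h : comp ε c l ≠ 0) :
    ∃ α ∈ c.support, wt ε α = l := by
  by_contra hcon
  push_neg at hcon
  exact h (comp_eq_zero ε c l hcon)

open scoped Classical in
theorem eig_comp (h1 : ε ^ n = 1) (ψ : MvPolynomial (ZMod n) k →ₐ[k] K)
    (d : Derivation k K K) (hd : ∀ j, d (ψ (X j)) = ψ (X (j + 1)))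
    (c : (ZMod n → ℕ) →₀ k) (l : k) :
    d (ψ (comp ε c l)) = l • ψ (comp ε c l) := by
  rw [comp, map_sum, map_sum, Finset.smul_sum]
  refine Finset.sum_congr rfl fun α hα => ?_
  rw [map_smul, Derivation.map_smul, eig_P_K ε h1 ψ d hd α,
    (Finset.mem_filter.mp hα).2, smul_comm]

theorem eig_sub_mul (d : Derivation k K K) {f a b : K} {l : k} (hf : d f = 0)
    (ha : d a = l • a) (hb : d b = l • b) : d (a - f * b) = l • (a - f * b) := by
  rw [map_sub, ha, Derivation.leibniz, hf, smul_zero, add_zero, hb, smul_eq_mul,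
    mul_smul_comm, smul_sub]

end Stmt6Aux

open Stmt6Aux
/-- The field of constants `k(X)^d` is the field of quotients of the ring
of constants `k[X]^d`: every rational function `f` with `d(f) = 0` can be written as
`f = F/G`, where `F, G` are polynomials, `G ≠ 0`, and `d(F) = d(G) = 0`. -/
theorem stmt_6 {k : Type*} [Field k] [CharZero k] (n : ℕ) (hn : 3 ≤ n)
    (ε : k) (hε : IsPrimitiveRoot ε n)
    (d : Derivation k (FractionRing (MvPolynomial (ZMod n) k))
      (FractionRing (MvPolynomial (ZMod n) k)))
    (hd : ∀ j : ZMod n,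
      d (algebraMap (MvPolynomial (ZMod n) k) (FractionRing (MvPolynomial (ZMod n) k)) (X j))
        = algebraMap (MvPolynomial (ZMod n) k) (FractionRing (MvPolynomial (ZMod n) k))
            (X (j + 1)))
    (f : FractionRing (MvPolynomial (ZMod n) k)) (hf : d f = 0) :
    ∃ F G : MvPolynomial (ZMod n) k, G ≠ 0 ∧
      d (algebraMap (MvPolynomial (ZMod n) k) (FractionRing (MvPolynomial (ZMod n) k)) F) = 0 ∧
      d (algebraMap (MvPolynomial (ZMod n) k) (FractionRing (MvPolynomial (ZMod n) k)) G) = 0 ∧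
      f = algebraMap (MvPolynomial (ZMod n) k) (FractionRing (MvPolynomial (ZMod n) k)) F /
            algebraMap (MvPolynomial (ZMod n) k) (FractionRing (MvPolynomial (ZMod n) k)) G := by
  classical
  haveI : NeZero n := ⟨by omega⟩
  have hn1 : (1 : ZMod n) ≠ 0 := by
    haveI : Fact (1 < n) := ⟨by omega⟩
    exact one_ne_zero
  have h1 : ε ^ n = 1 := hε.pow_eq_one
  let ψ : MvPolynomial (ZMod n) k →ₐ[k] FractionRing (MvPolynomial (ZMod n) k) :=
    IsScalarTower.toAlgHom k _ _
  have hψ : ∀ p : MvPolynomial (ZMod n) k,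
      ψ p = algebraMap (MvPolynomial (ZMod n) k) (FractionRing (MvPolynomial (ZMod n) k)) p :=
    fun p => rfl
  have hinj : Function.Injective ψ := IsFractionRing.injective _ _
  have hd' : ∀ j : ZMod n, d (ψ (X j)) = ψ (X (j + 1)) := fun j => hd j
  obtain ⟨A, B, hBmem, hABf⟩ := IsFractionRing.div_surjective (A := MvPolynomial (ZMod n) k) f
  have hB0 : B ≠ 0 := nonZeroDivisors.ne_zero hBmem
  have hψB0 : ψ B ≠ 0 := fun h => hB0 ((map_eq_zero_iff _ hinj).mp h)
  have hfB : f * ψ B = ψ A := by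
    rw [hψ, hψ, ← hABf, div_mul_cancel₀]
    rw [← hψ B]; exact hψB0
  have hspan := span_P ε hε (n := n)
  have hA : A ∈ Submodule.span k (Set.range (P (n := n) ε)) := by rw [hspan]; trivial
  have hB : B ∈ Submodule.span k (Set.range (P (n := n) ε)) := by rw [hspan]; trivial
  obtain ⟨cA, hcA⟩ := Finsupp.mem_span_range_iff_exists_finsupp.mp hA
  obtain ⟨cB, hcB⟩ := Finsupp.mem_span_range_iff_exists_finsupp.mp hB
  set S : Finset k := cA.support.image (wt ε) ∪ cB.support.image (wt ε) with hSdef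
  have hcompA : ∑ l ∈ S, comp ε cA l = A := by
    rw [comp_sum ε cA S (fun α hα => Finset.mem_union_left _ (mem_image_of_mem _ hα)),
      ← hcA, Finsupp.sum]
  have hcompB : ∑ l ∈ S, comp ε cB l = B := by
    rw [comp_sum ε cB S (fun α hα => Finset.mem_union_right _ (mem_image_of_mem _ hα)),
      ← hcB, Finsupp.sum]
  have hv : ∀ l ∈ S, d (ψ (comp ε cA l) - f * ψ (comp ε cB l))
      = l • (ψ (comp ε cA l) - f * ψ (comp ε cB l)) := fun l _ =>
    eig_sub_mul d hf (eig_comp ε h1 ψ d hd' cA l) (eig_comp ε h1 ψ d hd' cB l)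
  have hsumv : ∑ l ∈ S, (ψ (comp ε cA l) - f * ψ (comp ε cB l)) = 0 := by
    rw [Finset.sum_sub_distrib, ← Finset.mul_sum, ← map_sum, ← map_sum, hcompA, hcompB, hfB,
      sub_self]
  have hall := eig_sum_zero d S _ hv hsumv
  have hex : ∃ l0 ∈ S, comp ε cB l0 ≠ 0 := by
    by_contra h
    push_neg at h
    exact hB0 (by rw [← hcompB, Finset.sum_eq_zero h])
  obtain ⟨l0, hl0S, hcompB0⟩ := hex
  have hveq : ψ (comp ε cA l0) = f * ψ (comp ε cB l0) := sub_eq_zero.mp (hall l0 hl0S)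
  obtain ⟨α₀, -, hwtα₀⟩ := comp_wt_mem ε cB l0 hcompB0
  have hwtβ : wt ε (fun j => (∑ i : ZMod n, α₀ i) - α₀ j) = - l0 := by
    rw [wt_compl ε hε hn1 α₀, hwtα₀]
  refine ⟨comp ε cA l0 * P ε (fun j => (∑ i : ZMod n, α₀ i) - α₀ j),
    comp ε cB l0 * P ε (fun j => (∑ i : ZMod n, α₀ i) - α₀ j),
    mul_ne_zero hcompB0 (P_ne_zero ε h1 _), ?_, ?_, ?_⟩
  · rw [← hψ, map_mul, eig_mul d (eig_comp ε h1 ψ d hd' cA l0) (eig_P_K ε h1 ψ d hd' _), hwtβ,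
      add_neg_cancel, zero_smul]
  · rw [← hψ, map_mul, eig_mul d (eig_comp ε h1 ψ d hd' cB l0) (eig_P_K ε h1 ψ d hd' _), hwtβ,
      add_neg_cancel, zero_smul]
  · have hψG0 : ψ (comp ε cB l0 * P ε (fun j => (∑ i : ZMod n, α₀ i) - α₀ j)) ≠ 0 :=
      fun h => mul_ne_zero hcompB0 (P_ne_zero ε h1 _) ((map_eq_zero_iff _ hinj).mp h)
    rw [← hψ, ← hψ, eq_div_iff hψG0, map_mul, map_mul, hveq]
    ring
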